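/- Let m₀ ≥ 2 and k ≥ 1 be integers. Then (c_k/((k+1)m₀−1)!)² > (c_{k−1}/((k·m₀−1)!))·(c_{k+1}/(((k+2)m₀−1)!)) and (d_k/((k+1)m₀−1)!)² > (d_{k−1}/((k·m₀−1)!))·(d_{k+1}/(((k+2)m₀−1)!)); that is, the sequences {c_k/((k+1)m₀−1)!}_{k≥0} and {d_k/((k+1)m₀−1)!}_{k≥0} are strictly log-concave. -/

import Mathlib

/-- `c_k = (k+1)^{k-1}/k!` (with an integer exponent, so that `c₀ = 1`). -/
noncomputable def ck (k : ℕ) : ℚ := ((k : ℚ) + 1) ^ ((k : ℤ) - 1) / (k.factorial : ℚ)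

/-- `d_k = (k+1)^{k-2}/k!` (with an integer exponent, so that `d₀ = 1`, `d₁ = 1/2`). -/
noncomputable def dk (k : ℕ) : ℚ := ((k : ℚ) + 1) ^ ((k : ℤ) - 2) / (k.factorial : ℚ)

private lemma zp1 (a : ℚ) (i : ℕ) (h : a ≠ 0) : a ^ ((i:ℤ) - 1) = a ^ i / a := by
  rw [zpow_sub₀ h, zpow_natCast, zpow_one]

private lemma zp2 (a : ℚ) (i : ℕ) (h : a ≠ 0) : a ^ ((i:ℤ) - 2) = a ^ i / a ^ 2 := by
  rw [zpow_sub₀ h, zpow_natCast, show (2:ℤ) = ((2:ℕ):ℤ) from rfl, zpow_natCast]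

private lemma asc_mono {a b : ℕ} (h : a ≤ b) : ∀ j, a.ascFactorial j ≤ b.ascFactorial j
  | 0 => le_refl 1
  | j + 1 => by
      rw [Nat.ascFactorial_succ, Nat.ascFactorial_succ]
      exact Nat.mul_le_mul (by omega) (asc_mono h j)

private lemma asc_peel (n j : ℕ) : n.ascFactorial (j+1) = n * (n+1).ascFactorial j := by
  rw [Nat.ascFactorial_succ]; exact (Nat.succ_ascFactorial n j).symm

private lemma asc_strict {a b j : ℕ} (h : a < b) (hj : 1 ≤ j) :
    a.ascFactorial j < b.ascFactorial j := by
  obtain ⟨j, rfl⟩ : ∃ j', j = j' + 1 := ⟨j - 1, by omega⟩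
  obtain ⟨b, rfl⟩ : ∃ b', b = b' + 1 := ⟨b - 1, by omega⟩
  rw [Nat.ascFactorial_succ, Nat.ascFactorial_succ]
  have hpos : 0 < (b + 1).ascFactorial j := Nat.ascFactorial_pos b j
  calc (a + j) * a.ascFactorial j ≤ (a + j) * (b + 1).ascFactorial j :=
        Nat.mul_le_mul_left _ (asc_mono h.le j)
    _ < (b + 1 + j) * (b + 1).ascFactorial j := by
        exact Nat.mul_lt_mul_of_lt_of_le (by omega) (le_refl _) hpos

/-- The key factorial inequality: `(k+1)·Q² < k·P·R`. -/
private lemma fact_key (m₀ k : ℕ) (hm : 2 ≤ m₀) (hk : 1 ≤ k) :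
    (k + 1) * ((k + 1) * m₀ - 1).factorial ^ 2 <
      k * ((k * m₀ - 1).factorial * ((k + 2) * m₀ - 1).factorial) := by
  set P := (k * m₀ - 1).factorial with hP
  set Q := ((k + 1) * m₀ - 1).factorial with hQdef
  set R := ((k + 2) * m₀ - 1).factorial with hR
  set A := (k * m₀).ascFactorial m₀ with hA
  set B := ((k + 1) * m₀).ascFactorial m₀ with hB
  have e1 : P * A = Q := by
    have h := Nat.factorial_mul_ascFactorial' (k * m₀) m₀ (by positivity)
    rw [hP, hA, hQdef, h]
    congr 1
    have : (k + 1) * m₀ = k * m₀ + m₀ := by ring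
    omega
  have e2 : Q * B = R := by
    have h := Nat.factorial_mul_ascFactorial' ((k + 1) * m₀) m₀ (by positivity)
    rw [hQdef, hB, hR, h]
    congr 1
    have : (k + 2) * m₀ = (k + 1) * m₀ + m₀ := by ring
    omega
  have key : (k + 1) * A < k * B := by
    obtain ⟨m, rfl⟩ : ∃ m, m₀ = m + 1 + 1 := ⟨m₀ - 2, by omega⟩
    rw [hA, hB, asc_peel (k * (m + 1 + 1)) (m + 1), asc_peel ((k + 1) * (m + 1 + 1)) (m + 1)]
    have hstrict : (k * (m + 1 + 1) + 1).ascFactorial (m + 1) <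
        ((k + 1) * (m + 1 + 1) + 1).ascFactorial (m + 1) := by
      refine asc_strict ?_ (by omega)
      have : k * (m + 1 + 1) < (k + 1) * (m + 1 + 1) := by nlinarith
      omega
    calc (k + 1) * (k * (m + 1 + 1) * (k * (m + 1 + 1) + 1).ascFactorial (m + 1))
        = (k * ((k + 1) * (m + 1 + 1))) * (k * (m + 1 + 1) + 1).ascFactorial (m + 1) := by ring
      _ < (k * ((k + 1) * (m + 1 + 1))) * ((k + 1) * (m + 1 + 1) + 1).ascFactorial (m + 1) := by
          exact Nat.mul_lt_mul_of_le_of_lt (le_refl _) hstrict (by positivity)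
      _ = k * ((k + 1) * (m + 1 + 1) * ((k + 1) * (m + 1 + 1) + 1).ascFactorial (m + 1)) := by
          ring
  have hPQpos : 0 < P * Q := Nat.mul_pos (Nat.factorial_pos _) (Nat.factorial_pos _)
  calc (k + 1) * Q ^ 2 = (P * Q) * ((k + 1) * A) := by rw [← e1]; ring
    _ < (P * Q) * (k * B) := Nat.mul_lt_mul_of_le_of_lt (le_refl _) key hPQpos
    _ = k * (P * R) := by rw [← e2]; ring

private lemma ck_key (k : ℕ) (hk : 1 ≤ k) :
    ck (k - 1) * ck (k + 1) * k ≤ ck k ^ 2 * (k + 1) := by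
  obtain ⟨n, rfl⟩ : ∃ n, k = n + 1 := ⟨k - 1, by omega⟩
  simp only [Nat.add_sub_cancel]
  push_cast
  set x := (n : ℚ) with hx
  have hx0 : (0:ℚ) ≤ x := by positivity
  set f := (n.factorial : ℚ) with hf
  have hf0 : (0:ℚ) < f := by rw [hf]; positivity
  have e0 : ck n = (x + 1) ^ n / ((x + 1) * f) := by
    rw [ck, zp1 _ _ (by positivity), div_div]
  have e1 : ck (n + 1) = (x + 2) ^ (n + 1) / ((x + 2) * ((x + 1) * f)) := by
    rw [ck, zp1 _ _ (by positivity : ((((n:ℕ) + 1 : ℕ)):ℚ) + 1 ≠ 0)]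
    rw [Nat.factorial_succ]
    push_cast
    rw [div_div]
    ring_nf
    rfl
  have e2 : ck (n + 1 + 1) = (x + 3) ^ (n + 2) / ((x + 3) * ((x + 2) * ((x + 1) * f))) := by
    rw [ck, zp1 _ _ (by positivity : ((((n:ℕ) + 1 + 1 : ℕ)):ℚ) + 1 ≠ 0)]
    rw [Nat.factorial_succ, Nat.factorial_succ]
    push_cast
    rw [div_div]
    ring_nf
    rfl
  rw [e0, e1, e2]
  rw [div_mul_div_comm, div_mul_eq_mul_div, div_pow, div_mul_eq_mul_div,
    div_le_div_iff₀ (by positivity) (by positivity)]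
  have key : (x + 1) ^ (n + 1) * (x + 3) ^ (n + 1) ≤ (x + 2) ^ (n + 1) * (x + 2) ^ (n + 1) := by
    rw [← mul_pow, ← mul_pow]
    exact pow_le_pow_left₀ (by positivity) (by nlinarith) (n + 1)
  have hM : (0:ℚ) ≤ (x + 3) * (x + 2) ^ 2 * (x + 1) ^ 2 * f ^ 2 := by positivity
  calc (x + 1) ^ n * (x + 3) ^ (n + 2) * (x + 1) * ((x + 2) * ((x + 1) * f)) ^ 2
      = ((x + 1) ^ (n + 1) * (x + 3) ^ (n + 1)) *
        ((x + 3) * (x + 2) ^ 2 * (x + 1) ^ 2 * f ^ 2) := by ring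
    _ ≤ ((x + 2) ^ (n + 1) * (x + 2) ^ (n + 1)) *
        ((x + 3) * (x + 2) ^ 2 * (x + 1) ^ 2 * f ^ 2) :=
        mul_le_mul_of_nonneg_right key hM
    _ = ((x + 2) ^ (n + 1)) ^ 2 * (x + 1 + 1) *
        ((x + 1) * f * ((x + 3) * ((x + 2) * ((x + 1) * f)))) := by ring

private lemma dk_key (k : ℕ) (hk : 1 ≤ k) :
    dk (k - 1) * dk (k + 1) * k ≤ dk k ^ 2 * (k + 1) := by
  obtain ⟨n, rfl⟩ : ∃ n, k = n + 1 := ⟨k - 1, by omega⟩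
  simp only [Nat.add_sub_cancel]
  push_cast
  set x := (n : ℚ) with hx
  have hx0 : (0:ℚ) ≤ x := by positivity
  set f := (n.factorial : ℚ) with hf
  have hf0 : (0:ℚ) < f := by rw [hf]; positivity
  have e0 : dk n = (x + 1) ^ n / ((x + 1) ^ 2 * f) := by
    rw [dk, zp2 _ _ (by positivity), div_div]
  have e1 : dk (n + 1) = (x + 2) ^ (n + 1) / ((x + 2) ^ 2 * ((x + 1) * f)) := by
    rw [dk, zp2 _ _ (by positivity : ((((n:ℕ) + 1 : ℕ)):ℚ) + 1 ≠ 0)]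
    rw [Nat.factorial_succ]
    push_cast
    rw [div_div]
    ring_nf
    rfl
  have e2 : dk (n + 1 + 1) = (x + 3) ^ (n + 2) / ((x + 3) ^ 2 * ((x + 2) * ((x + 1) * f))) := by
    rw [dk, zp2 _ _ (by positivity : ((((n:ℕ) + 1 + 1 : ℕ)):ℚ) + 1 ≠ 0)]
    rw [Nat.factorial_succ, Nat.factorial_succ]
    push_cast
    rw [div_div]
    ring_nf
    rfl
  rw [e0, e1, e2]
  rw [div_mul_div_comm, div_mul_eq_mul_div, div_pow, div_mul_eq_mul_div,
    div_le_div_iff₀ (by positivity) (by positivity)]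
  have key : (x + 1) ^ n * (x + 3) ^ n ≤ (x + 2) ^ n * (x + 2) ^ n := by
    rw [← mul_pow, ← mul_pow]
    exact pow_le_pow_left₀ (by positivity) (by nlinarith) n
  have hM : (0:ℚ) ≤ (x + 1) ^ 3 * (x + 3) ^ 2 * (x + 2) ^ 4 * f ^ 2 := by positivity
  calc (x + 1) ^ n * (x + 3) ^ (n + 2) * (x + 1) * ((x + 2) ^ 2 * ((x + 1) * f)) ^ 2
      = ((x + 1) ^ n * (x + 3) ^ n) *
        ((x + 1) ^ 3 * (x + 3) ^ 2 * (x + 2) ^ 4 * f ^ 2) := by ring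
    _ ≤ ((x + 2) ^ n * (x + 2) ^ n) *
        ((x + 1) ^ 3 * (x + 3) ^ 2 * (x + 2) ^ 4 * f ^ 2) :=
        mul_le_mul_of_nonneg_right key hM
    _ = ((x + 2) ^ (n + 1)) ^ 2 * (x + 1 + 1) *
        ((x + 1) ^ 2 * f * ((x + 3) ^ 2 * ((x + 2) * ((x + 1) * f)))) := by ring

/-- For integers `m₀ ≥ 2` and `k ≥ 1`, the sequences
`{c_k/((k+1)m₀−1)!}` and `{d_k/((k+1)m₀−1)!}` are strictly log-concave at `k`. -/
theorem ck_dk_strict_log_concave (m₀ k : ℕ) (hm : 2 ≤ m₀) (hk : 1 ≤ k) :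
    (ck k / (((k + 1) * m₀ - 1).factorial : ℚ)) ^ 2 >
        ck (k - 1) / ((k * m₀ - 1).factorial : ℚ) *
          (ck (k + 1) / (((k + 2) * m₀ - 1).factorial : ℚ)) ∧
    (dk k / (((k + 1) * m₀ - 1).factorial : ℚ)) ^ 2 >
        dk (k - 1) / ((k * m₀ - 1).factorial : ℚ) *
          (dk (k + 1) / (((k + 2) * m₀ - 1).factorial : ℚ)) := by
  have hfactQ : ((k:ℚ) + 1) * ((((k + 1) * m₀ - 1).factorial : ℚ)) ^ 2 <
      (k:ℚ) * (((k * m₀ - 1).factorial : ℚ) * (((k + 2) * m₀ - 1).factorial : ℚ)) := by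
    exact_mod_cast fact_key m₀ k hm hk
  have hkpos : (0:ℚ) < (k:ℚ) := by exact_mod_cast hk
  constructor
  · have hckpos : 0 < ck k ^ 2 := by
      have : 0 < ck k := div_pos (zpow_pos (by positivity) _) (by positivity)
      positivity
    rw [gt_iff_lt, div_mul_div_comm, div_pow,
      div_lt_div_iff₀ (by positivity) (by positivity)]
    nlinarith [mul_le_mul_of_nonneg_right (ck_key k hk)
        (sq_nonneg ((((k + 1) * m₀ - 1).factorial : ℚ))),
      mul_lt_mul_of_pos_left hfactQ hckpos]
  · have hdkpos : 0 < dk k ^ 2 := by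
      have : 0 < dk k := div_pos (zpow_pos (by positivity) _) (by positivity)
      positivity
    rw [gt_iff_lt, div_mul_div_comm, div_pow,
      div_lt_div_iff₀ (by positivity) (by positivity)]
    nlinarith [mul_le_mul_of_nonneg_right (dk_key k hk)
        (sq_nonneg ((((k + 1) * m₀ - 1).factorial : ℚ))),
      mul_lt_mul_of_pos_left hfactQ hdkpos]
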